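/- Let a two-player zero-sum POSG with finite horizon H be given, let 0 ≤ τ ≤ H−1 and let o_τ be an occupancy state. Then the local game Q*_τ(o_τ, ·, ·) admits at least one Nash equilibrium, i.e., a decision rule profile (β¹*_τ, β²*_τ) such that Q*_τ(o_τ, β¹_τ, β²*_τ) ≤ Q*_τ(o_τ, β¹*_τ, β²*_τ) ≤ Q*_τ(o_τ, β¹*_τ, β²_τ) for all β¹_τ, β²_τ; moreover every such Nash equilibrium has the same value, namely V*_τ(o_τ). -/

import Mathlib

open scoped BigOperators

/-- A two-player zero-sum partially observable stochastic game. -/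
structure POSG where
  S : Type
  A1 : Type
  A2 : Type
  Z1 : Type
  Z2 : Type
  [fintS : Fintype S]
  [fintA1 : Fintype A1]
  [fintA2 : Fintype A2]
  [fintZ1 : Fintype Z1]
  [fintZ2 : Fintype Z2]
  [neS : Nonempty S]
  [neA1 : Nonempty A1]
  [neA2 : Nonempty A2]
  [neZ1 : Nonempty Z1]
  [neZ2 : Nonempty Z2]
  P : S → A1 → A2 → S × Z1 × Z2 → ℝ
  P_nonneg : ∀ s a1 a2 x, 0 ≤ P s a1 a2 x
  P_sum_one : ∀ s a1 a2, ∑ x, P s a1 a2 x = 1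
  r : S → A1 → A2 → ℝ
  H : ℕ
  γ : ℝ
  γ_nonneg : 0 ≤ γ
  γ_lt_one : γ < 1

attribute [instance] POSG.fintS POSG.fintA1 POSG.fintA2 POSG.fintZ1 POSG.fintZ2
  POSG.neS POSG.neA1 POSG.neA2 POSG.neZ1 POSG.neZ2

/-- A length-`t` private history: a sequence of action-observation pairs. -/
abbrev Hist (A Z : Type) (t : ℕ) : Type := Fin t → A × Z

/-- A vector indexed by state–joint-history triples (the ambient space of occupancy states). -/
abbrev OccVec (G : POSG) (t : ℕ) : Type := G.S × Hist G.A1 G.Z1 t × Hist G.A2 G.Z2 t → ℝ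

/-- `o` is an occupancy state (a probability distribution). -/
def IsOcc (G : POSG) (t : ℕ) (o : OccVec G t) : Prop :=
  (∀ x, 0 ≤ o x) ∧ ∑ x, o x = 1

/-- A vector indexed by history–action pairs (the ambient space of behavioral decision rules). -/
abbrev DRVec (A Z : Type) (t : ℕ) : Type := Hist A Z t → A → ℝ

/-- `β` is a behavioral decision rule. -/
def IsDR {A Z : Type} [Fintype A] (t : ℕ) (β : DRVec A Z t) : Prop :=
  (∀ θ a, 0 ≤ β θ a) ∧ ∀ θ, ∑ a, β θ a = 1

/-- The occupancy-state transition `T(o, β¹, β²)`. -/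
noncomputable def Tr (G : POSG) (t : ℕ) (o : OccVec G t)
    (β1 : DRVec G.A1 G.Z1 t) (β2 : DRVec G.A2 G.Z2 t) : OccVec G (t + 1) :=
  fun x =>
    β1 (Fin.init x.2.1) (x.2.1 (Fin.last t)).1 * β2 (Fin.init x.2.2) (x.2.2 (Fin.last t)).1 *
      ∑ s, G.P s (x.2.1 (Fin.last t)).1 (x.2.2 (Fin.last t)).1
          (x.1, (x.2.1 (Fin.last t)).2, (x.2.2 (Fin.last t)).2) *
        o (s, Fin.init x.2.1, Fin.init x.2.2)

/-- The expected immediate reward `r(o, β¹, β²)`. -/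
noncomputable def Rew (G : POSG) (t : ℕ) (o : OccVec G t)
    (β1 : DRVec G.A1 G.Z1 t) (β2 : DRVec G.A2 G.Z2 t) : ℝ :=
  ∑ x : G.S × Hist G.A1 G.Z1 t × Hist G.A2 G.Z2 t, ∑ a1 : G.A1, ∑ a2 : G.A2,
    o x * β1 x.2.1 a1 * β2 x.2.2 a2 * G.r x.1 a1 a2

/-- A behavioral strategy: a decision rule for each time step. -/
abbrev Strat (A Z : Type) : Type := ∀ t : ℕ, DRVec A Z t

def IsStrat {A Z : Type} [Fintype A] (β : Strat A Z) : Prop := ∀ t, IsDR t (β t)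

/-- Value with `n` remaining steps starting at time `t`. -/
noncomputable def ValAux (G : POSG) :
    (n : ℕ) → (t : ℕ) → OccVec G t → Strat G.A1 G.Z1 → Strat G.A2 G.Z2 → ℝ
  | 0, _, _, _, _ => 0
  | n + 1, t, o, β1, β2 =>
      Rew G t o (β1 t) (β2 t) + G.γ * ValAux G n (t + 1) (Tr G t o (β1 t) (β2 t)) β1 β2

/-- The value `V_τ(o_τ, β_{τ:H−1})` (with `V_H = 0`). -/
noncomputable def Val (G : POSG) (t : ℕ) (o : OccVec G t)
    (β1 : Strat G.A1 G.Z1) (β2 : Strat G.A2 G.Z2) : ℝ :=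
  ValAux G (G.H - t) t o β1 β2

/-- The optimal (maximin) value `V*_τ(o_τ)`. -/
noncomputable def Vstar (G : POSG) (t : ℕ) (o : OccVec G t) : ℝ :=
  ⨆ β1 : {β : Strat G.A1 G.Z1 // IsStrat β},
    ⨅ β2 : {β : Strat G.A2 G.Z2 // IsStrat β}, Val G t o β1.1 β2.1

/-- The local game `Q*_τ(o_τ, β¹_τ, β²_τ)`. -/
noncomputable def Qstar (G : POSG) (t : ℕ) (o : OccVec G t)
    (β1 : DRVec G.A1 G.Z1 t) (β2 : DRVec G.A2 G.Z2 t) : ℝ :=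
  Rew G t o β1 β2 + G.γ * Vstar G (t + 1) (Tr G t o β1 β2)


section Minimax

variable {I J : Type} [Fintype I] [Fintype J]

/-- Ville-type lemma: separating-hyperplane step. -/
theorem ville_step {X : Set (I → ℝ)} (hXne : X.Nonempty) (hXc : IsCompact X)
    (hXconv : Convex ℝ X)
    {nn : ℕ} (c : Fin nn → (I → ℝ) → ℝ) (hc : ∀ j, Continuous (c j))
    (hlin : ∀ j, IsLinearMap ℝ (c j)) (w : ℝ)
    (hyp : ∀ lam ∈ stdSimplex ℝ (Fin nn), ∃ x ∈ X, w ≤ ∑ j, lam j * c j x) :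
    ∃ x ∈ X, ∀ j, w ≤ c j x := by
  by_contra hcon
  push_neg at hcon
  -- D := image of X under (c j)_j
  set D : Set (Fin nn → ℝ) := (fun x => fun j => c j x) '' X with hD
  have hDc : IsCompact D := hXc.image (continuous_pi hc)
  have hDconv : Convex ℝ D := by
    rintro d ⟨x, hx, rfl⟩ d' ⟨x', hx', rfl⟩ p q hp hq hpq
    refine ⟨p • x + q • x', hXconv hx hx' hp hq hpq, ?_⟩
    funext j
    simp [(hlin j).map_add, (hlin j).map_smul, smul_eq_mul]
  have hQconv : Convex ℝ {d : Fin nn → ℝ | ∀ j, w ≤ d j} := by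
    intro a ha b hb p q hp hq hpq j
    have h1 := ha j; have h2 := hb j
    have : (p • a + q • b) j = p * a j + q * b j := by
      simp [smul_eq_mul]
    rw [this]
    have hw : w = p * w + q * w := by rw [← add_mul, hpq, one_mul]
    linarith [mul_le_mul_of_nonneg_left h1 hp, mul_le_mul_of_nonneg_left h2 hq]
  have hQclosed : IsClosed {d : Fin nn → ℝ | ∀ j, w ≤ d j} := by
    have : {d : Fin nn → ℝ | ∀ j, w ≤ d j} = ⋂ j, {d | w ≤ d j} := by
      ext d; simp [Set.mem_iInter]
    rw [this]
    exact isClosed_iInter fun j => isClosed_le continuous_const (continuous_apply j)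
  have hdisj : Disjoint D {d : Fin nn → ℝ | ∀ j, w ≤ d j} := by
    rw [Set.disjoint_left]
    rintro d ⟨x, hx, rfl⟩ hd
    obtain ⟨j, hj⟩ := hcon x hx
    exact absurd (hd j) (not_le.2 hj)
  obtain ⟨f, u, v, hfD, huv, hfQ⟩ :=
    geometric_hahn_banach_compact_closed hDconv hDc hQconv hQclosed hdisj
  set φ : Fin nn → ℝ := fun j => f (fun i => if j = i then 1 else 0) with hφ
  have hfapp : ∀ d : Fin nn → ℝ, f d = ∑ j, d j * φ j := by
    intro d
    have h := f.toLinearMap.pi_apply_eq_sum_univ d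
    simp only [smul_eq_mul] at h
    exact h
  -- the constant function w is in Q
  have hwQ : (fun _ : Fin nn => w) ∈ {d : Fin nn → ℝ | ∀ j, w ≤ d j} :=
    fun j => le_refl w
  have hfw : f (fun _ => w) = w * ∑ j, φ j := by
    rw [hfapp]; rw [Finset.mul_sum]
  -- each φ j is nonnegative
  have hφnonneg : ∀ j, 0 ≤ φ j := by
    intro j
    by_contra hneg
    push_neg at hneg
    have hfv : v < f (fun _ => w) := hfQ _ hwQ
    have hden : (0:ℝ) < -φ j := by linarith
    set t : ℝ := ((f (fun _ => w)) - v + 1) / (-φ j) with ht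
    have htpos : 0 < t := div_pos (by linarith) hden
    have hmem : ((fun _ => w) + t • (fun i => if j = i then (1:ℝ) else 0)) ∈
        {d : Fin nn → ℝ | ∀ j, w ≤ d j} := by
      intro i
      simp only [Pi.add_apply, Pi.smul_apply, smul_eq_mul]
      rcases eq_or_ne j i with rfl | hij
      · simp only [if_pos rfl, mul_one]
        simp only [if_true]
        linarith
      · simp [if_neg hij]
    have hval : f ((fun _ => w) + t • (fun i => if j = i then (1:ℝ) else 0))
        = f (fun _ => w) + t * φ j := by
      rw [map_add, map_smul, smul_eq_mul]
    have htφ : t * φ j = -((f (fun _ => w)) - v + 1) := by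
      rw [ht]
      have hφne : -φ j ≠ 0 := ne_of_gt hden
      rw [div_mul_eq_mul_div, div_eq_iff hφne]
      ring
    have := hfQ _ hmem
    rw [hval, htφ] at this
    linarith
  -- φ is not identically zero
  have hφsum : 0 < ∑ j, φ j := by
    rcases hXne with ⟨x0, hx0⟩
    have hd0 : (fun j => c j x0) ∈ D := ⟨x0, hx0, rfl⟩
    have h1 : f (fun j => c j x0) < u := hfD _ hd0
    have h2 : v < w * ∑ j, φ j := by rw [← hfw]; exact hfQ _ hwQ
    by_contra hle
    push_neg at hle
    have hsum0 : ∑ j, φ j = 0 :=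
      le_antisymm hle (Finset.sum_nonneg fun j _ => hφnonneg j)
    have hφ0 : ∀ j ∈ Finset.univ, φ j = 0 := by
      rw [← Finset.sum_eq_zero_iff_of_nonneg (fun j _ => hφnonneg j)]
      exact hsum0
    have hzero : ∀ d : Fin nn → ℝ, f d = 0 := by
      intro d
      rw [hfapp]
      exact Finset.sum_eq_zero fun j _ => by rw [hφ0 j (Finset.mem_univ j), mul_zero]
    rw [hzero] at h1
    have := hfQ _ hwQ
    rw [hzero] at this
    linarith
  -- normalize
  set lam : Fin nn → ℝ := fun j => φ j / ∑ i, φ i with hlam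
  have hlamS : lam ∈ stdSimplex ℝ (Fin nn) := by
    constructor
    · intro j; exact div_nonneg (hφnonneg j) hφsum.le
    · rw [← Finset.sum_div]; field_simp
  obtain ⟨x, hxX, hxw⟩ := hyp lam hlamS
  have hdx : (fun j => c j x) ∈ D := ⟨x, hxX, rfl⟩
  have h1 : f (fun j => c j x) < u := hfD _ hdx
  have h2 : v < w * ∑ j, φ j := by rw [← hfw]; exact hfQ _ hwQ
  have h3 : f (fun j => c j x) = ∑ j, c j x * φ j := hfapp _
  have h4 : ∑ j, lam j * c j x = (∑ j, c j x * φ j) / ∑ i, φ i := by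
    rw [Finset.sum_div]
    congr 1; funext j
    simp only [hlam]
    ring
  have h5 : w * ∑ i, φ i ≤ ∑ j, c j x * φ j := by
    rw [h4] at hxw
    calc w * ∑ i, φ i ≤ ((∑ j, c j x * φ j) / ∑ i, φ i) * ∑ i, φ i := by
          exact mul_le_mul_of_nonneg_right hxw hφsum.le
      _ = ∑ j, c j x * φ j := by field_simp
  linarith


/-- Finite-intersection-property extension of `ville_step`. -/
theorem fip_step {X : Set (I → ℝ)} (hXne : X.Nonempty) (hXc : IsCompact X)
    (hXconv : Convex ℝ X) {Y : Set (J → ℝ)} (hYconv : Convex ℝ Y)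
    (B : (I → ℝ) → (J → ℝ) → ℝ)
    (hBc1 : ∀ y, Continuous (fun x => B x y))
    (hBls : ∀ y, IsLinearMap ℝ (fun x => B x y))
    (hBrs : ∀ x, IsLinearMap ℝ (fun y => B x y))
    (w : ℝ) (hyp : ∀ y ∈ Y, ∃ x ∈ X, w ≤ B x y) :
    ∃ x ∈ X, ∀ y ∈ Y, w ≤ B x y := by
  have key : (X ∩ ⋂ y : Y, {x | w ≤ B x y.1}).Nonempty := by
    by_contra hemp
    rw [Set.not_nonempty_iff_eq_empty] at hemp
    obtain ⟨t, ht⟩ := hXc.elim_finite_subfamily_closed (fun y : Y => {x | w ≤ B x y.1})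
      (fun y => isClosed_le continuous_const (hBc1 y.1)) hemp
    set nn := t.card with hnn
    set e := t.equivFin with he
    set ys : Fin nn → (J → ℝ) := fun j => ((e.symm j : t) : Y).1 with hys
    have hysY : ∀ j, ys j ∈ Y := fun j => ((e.symm j : t) : Y).2
    have hville := ville_step hXne hXc hXconv (fun j x => B x (ys j))
      (fun j => hBc1 (ys j)) (fun j => hBls (ys j)) w ?_
    · obtain ⟨x, hxX, hx⟩ := hville
      have hxmem : x ∈ X ∩ ⋂ y ∈ t, {x | w ≤ B x (y : Y).1} := by
        refine ⟨hxX, ?_⟩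
        rw [Set.mem_iInter₂]
        intro y hy
        have := hx (e ⟨y, hy⟩)
        simpa [hys, he] using this
      rw [ht] at hxmem
      exact hxmem
    · intro lam hlam
      have hyY : (∑ j, lam j • ys j) ∈ Y :=
        hYconv.sum_mem (fun j _ => hlam.1 j) hlam.2 (fun j _ => hysY j)
      obtain ⟨x, hxX, hx⟩ := hyp _ hyY
      refine ⟨x, hxX, ?_⟩
      have hlin : B x (∑ j, lam j • ys j) = ∑ j, lam j * B x (ys j) := by
        let g : (J → ℝ) →ₗ[ℝ] ℝ := IsLinearMap.mk' _ (hBrs x)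
        have hgB : ∀ y, g y = B x y := fun y => rfl
        calc B x (∑ j, lam j • ys j) = g (∑ j, lam j • ys j) := (hgB _).symm
          _ = ∑ j, g (lam j • ys j) := map_sum g _ _
          _ = ∑ j, lam j * B x (ys j) := Finset.sum_congr rfl fun j _ => by
              rw [map_smul, smul_eq_mul, hgB]
      rw [hlin] at hx
      exact hx
  obtain ⟨x, hxX, hx⟩ := key
  refine ⟨x, hxX, fun y hy => ?_⟩
  rw [Set.mem_iInter] at hx
  exact hx ⟨y, hy⟩

/-- Existence of a saddle point for a bilinear(ish) function on compact convex sets. -/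
theorem exists_saddle {X : Set (I → ℝ)} {Y : Set (J → ℝ)}
    (hXne : X.Nonempty) (hXc : IsCompact X) (hXconv : Convex ℝ X)
    (hYne : Y.Nonempty) (hYc : IsCompact Y) (hYconv : Convex ℝ Y)
    (B : (I → ℝ) → (J → ℝ) → ℝ)
    (hBc1 : ∀ y, Continuous (fun x => B x y))
    (hBc2 : ∀ x, Continuous (fun y => B x y))
    (hBls : ∀ y, IsLinearMap ℝ (fun x => B x y))
    (hBrs : ∀ x, IsLinearMap ℝ (fun y => B x y)) :
    ∃ xs ∈ X, ∃ ys ∈ Y,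
      (∀ x ∈ X, B x ys ≤ B xs ys) ∧ (∀ y ∈ Y, B xs ys ≤ B xs y) := by
  obtain ⟨x0, hx0⟩ := hXne
  obtain ⟨y0, hy0⟩ := hYne
  set g : (J → ℝ) → ℝ := fun y => sSup ((fun x => B x y) '' X) with hg
  set h : (I → ℝ) → ℝ := fun x => sInf ((fun y => B x y) '' Y) with hh
  have hXimne : ∀ y, ((fun x => B x y) '' X).Nonempty := fun y => ⟨B x0 y, x0, hx0, rfl⟩
  have hYimne : ∀ x, ((fun y => B x y) '' Y).Nonempty := fun x => ⟨B x y0, y0, hy0, rfl⟩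
  have hXbdd : ∀ y, BddAbove ((fun x => B x y) '' X) := fun y => (hXc.image (hBc1 y)).bddAbove
  have hYbdd : ∀ x, BddBelow ((fun y => B x y) '' Y) := fun x => (hYc.image (hBc2 x)).bddBelow
  have hB_le_g : ∀ y, ∀ x ∈ X, B x y ≤ g y := fun y x hx => le_csSup (hXbdd y) ⟨x, hx, rfl⟩
  have hh_le_B : ∀ x, ∀ y ∈ Y, h x ≤ B x y := fun x y hy => csInf_le (hYbdd x) ⟨y, hy, rfl⟩
  have hgimne : (g '' Y).Nonempty := ⟨g y0, y0, hy0, rfl⟩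
  have hhimne : (h '' X).Nonempty := ⟨h x0, x0, hx0, rfl⟩
  have hgbddBelow : BddBelow (g '' Y) := by
    refine ⟨sInf ((fun y => B x0 y) '' Y), ?_⟩
    rintro z ⟨y, hy, rfl⟩
    exact le_trans (csInf_le (hYbdd x0) ⟨y, hy, rfl⟩) (hB_le_g y x0 hx0)
  have hhbddAbove : BddAbove (h '' X) := by
    refine ⟨sSup ((fun x => B x y0) '' X), ?_⟩
    rintro z ⟨x, hx, rfl⟩
    exact le_trans (hh_le_B x y0 hy0) (le_csSup (hXbdd y0) ⟨x, hx, rfl⟩)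
  set w2 : ℝ := sInf (g '' Y) with hw2
  set w1 : ℝ := sSup (h '' X) with hw1
  have hw12 : w1 ≤ w2 := by
    refine le_csInf hgimne ?_
    rintro z ⟨y, hy, rfl⟩
    refine csSup_le hhimne ?_
    rintro z' ⟨x, hx, rfl⟩
    exact le_trans (hh_le_B x y hy) (hB_le_g y x hx)
  -- max player
  have hyp2 : ∀ y ∈ Y, ∃ x ∈ X, w2 ≤ B x y := by
    intro y hy
    obtain ⟨x, hxX, hxmax⟩ := hXc.exists_isMaxOn ⟨x0, hx0⟩ (hBc1 y).continuousOn
    refine ⟨x, hxX, ?_⟩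
    have hgy : g y ≤ B x y := by
      refine csSup_le (hXimne y) ?_
      rintro z ⟨x', hx', rfl⟩
      exact hxmax hx'
    exact le_trans (csInf_le hgbddBelow ⟨y, hy, rfl⟩) hgy
  obtain ⟨xs, hxsX, hxs⟩ := fip_step ⟨x0, hx0⟩ hXc hXconv hYconv B hBc1 hBls hBrs w2 hyp2
  -- min player
  have hB'c : ∀ x : I → ℝ, Continuous fun y => -B x y := fun x => (hBc2 x).neg
  have hB'ls : ∀ x : I → ℝ, IsLinearMap ℝ (fun y => -B x y) := fun x =>
    ⟨fun a b => by rw [(hBrs x).map_add]; ring,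
     fun c a => by rw [(hBrs x).map_smul]; simp [smul_eq_mul]⟩
  have hB'rs : ∀ y : J → ℝ, IsLinearMap ℝ (fun x => -B x y) := fun y =>
    ⟨fun a b => by rw [(hBls y).map_add]; ring,
     fun c a => by rw [(hBls y).map_smul]; simp [smul_eq_mul]⟩
  have hyp1 : ∀ x ∈ X, ∃ y ∈ Y, -w1 ≤ -B x y := by
    intro x hx
    obtain ⟨y, hyY, hymin⟩ := hYc.exists_isMinOn ⟨y0, hy0⟩ (hBc2 x).continuousOn
    refine ⟨y, hyY, ?_⟩
    have hBxy : B x y ≤ h x := by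
      refine le_csInf (hYimne x) ?_
      rintro z ⟨y', hy', rfl⟩
      exact hymin hy'
    have hxw1 : h x ≤ w1 := le_csSup hhbddAbove ⟨x, hx, rfl⟩
    linarith
  obtain ⟨ys, hysY, hys⟩ := fip_step ⟨y0, hy0⟩ hYc hYconv hXconv
    (fun y x => -B x y) hB'c hB'ls hB'rs (-w1) hyp1
  have h1 : ∀ x ∈ X, B x ys ≤ w1 := fun x hx => by
    have := hys x hx; linarith
  have h2 : ∀ y ∈ Y, w2 ≤ B xs y := hxs
  have hxy1 : B xs ys ≤ w1 := h1 xs hxsX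
  have hxy2 : w2 ≤ B xs ys := h2 ys hysY
  refine ⟨xs, hxsX, ys, hysY, fun x hx => ?_, fun y hy => ?_⟩
  · exact le_trans (h1 x hx) (le_trans hw12 hxy2)
  · exact le_trans hxy1 (le_trans hw12 (h2 y hy))

end Minimax


section Game

variable {A Z : Type}

/-- Realization weight of a private history suffix starting at time `τ`. -/
noncomputable def rho (τ : ℕ) (b : Strat A Z) : (k : ℕ) → Hist A Z (τ + k) → ℝ
  | 0, _ => 1
  | k+1, θ => rho τ b k (Fin.init θ) * b (τ + k) (Fin.init θ) (θ (Fin.last (τ + k))).1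

/-- Index type for realization plans. -/
abbrev PIdx (A Z : Type) (τ n : ℕ) : Type := (k : Fin (n+1)) × Hist A Z (τ + k.1)

/-- Realization plan of a behavioral strategy. -/
noncomputable def rhoV (τ n : ℕ) (b : Strat A Z) : PIdx A Z τ n → ℝ :=
  fun i => rho τ b i.1.1 i.2

/-- The polytope of realization plans. -/
def PlanSet (A Z : Type) [Fintype A] (τ n : ℕ) : Set (PIdx A Z τ n → ℝ) :=
  {x | (∀ θ : Hist A Z (τ + 0), x ⟨⟨0, Nat.succ_pos n⟩, θ⟩ = 1) ∧
       (∀ i, 0 ≤ x i) ∧ (∀ i, x i ≤ 1) ∧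
       (∀ k : ℕ, ∀ hk : k < n, ∀ θ : Hist A Z (τ + k), ∀ a : A, ∀ z z' : Z,
         x ⟨⟨k+1, by omega⟩, Fin.snoc θ (a, z)⟩ = x ⟨⟨k+1, by omega⟩, Fin.snoc θ (a, z')⟩) ∧
       (∀ k : ℕ, ∀ hk : k < n, ∀ θ : Hist A Z (τ + k), ∀ z : Z,
         (∑ a : A, x ⟨⟨k+1, by omega⟩, Fin.snoc θ (a, z)⟩) = x ⟨⟨k, by omega⟩, θ⟩)}

/-- Splice a decision rule at time `t0` into a strategy. -/
def splice (t0 : ℕ) (β : DRVec A Z t0) (b : Strat A Z) : Strat A Z :=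
  fun u => if h : u = t0 then (fun θ a => β (θ ∘ Fin.cast h.symm) a) else b u

lemma splice_self (t0 : ℕ) (β : DRVec A Z t0) (b : Strat A Z) :
    splice t0 β b t0 = β := by
  show (if h : t0 = t0 then (fun θ a => β (θ ∘ Fin.cast h.symm) a) else b t0) = β
  rw [dif_pos rfl]
  rfl

lemma rho_succ (τ : ℕ) (b : Strat A Z) (k : ℕ) (θ : Hist A Z (τ + (k+1))) :
    rho τ b (k+1) θ
      = rho τ b k (Fin.init θ) * b (τ + k) (Fin.init θ) (θ (Fin.last (τ + k))).1 := rfl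

lemma rho_snoc (τ : ℕ) (b : Strat A Z) (k : ℕ) (θ : Hist A Z (τ + k)) (a : A) (z : Z) :
    rho τ b (k+1) (Fin.snoc θ (a, z)) = rho τ b k θ * b (τ + k) θ a := by
  rw [rho_succ]
  simp [Fin.init_snoc, Fin.snoc_last]

lemma splice_ne (t0 : ℕ) (β : DRVec A Z t0) (b : Strat A Z) {u : ℕ} (h : u ≠ t0) :
    splice t0 β b u = b u := dif_neg h

lemma isStrat_splice [Fintype A] (t0 : ℕ) {β : DRVec A Z t0} {b : Strat A Z}
    (hβ : IsDR t0 β) (hb : IsStrat b) : IsStrat (splice t0 β b) := by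
  intro u
  rcases eq_or_ne u t0 with rfl | h
  · rw [splice_self]; exact hβ
  · rw [splice_ne _ _ _ h]; exact hb u

/-- The uniform strategy. -/
noncomputable def unifStrat (A Z : Type) [Fintype A] : Strat A Z :=
  fun _ _ _ => (Fintype.card A : ℝ)⁻¹

lemma isStrat_unifStrat [Fintype A] [Nonempty A] : IsStrat (unifStrat A Z) := by
  intro t
  constructor
  · intro θ a
    show (0:ℝ) ≤ (Fintype.card A : ℝ)⁻¹
    exact inv_nonneg.mpr (Nat.cast_nonneg _)
  · intro θ
    show (∑ _a : A, (Fintype.card A : ℝ)⁻¹) = 1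
    rw [Finset.sum_const, nsmul_eq_mul]
    rw [show (Finset.univ.card : ℝ) = (Fintype.card A : ℝ) from rfl]
    rw [mul_inv_cancel₀]
    exact Nat.cast_ne_zero.mpr Fintype.card_ne_zero

instance stratNonempty [Fintype A] [Nonempty A] : Nonempty {b : Strat A Z // IsStrat b} :=
  ⟨⟨unifStrat A Z, isStrat_unifStrat⟩⟩

/-- `rho` only depends on the strategy through the window `[τ, τ+k)`. -/
lemma rho_congr (τ : ℕ) {b b' : Strat A Z} :
    ∀ (k : ℕ), (∀ u, τ ≤ u → u < τ + k → b u = b' u) → ∀ θ : Hist A Z (τ + k),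
      rho τ b k θ = rho τ b' k θ := by
  intro k
  induction k with
  | zero => intro _ _; rfl
  | succ k ih =>
    intro hag θ
    show rho τ b k (Fin.init θ) * b (τ + k) (Fin.init θ) (θ (Fin.last (τ + k))).1 = _
    rw [ih (fun u hu hu' => hag u hu (by omega)) (Fin.init θ),
      hag (τ + k) (by omega) (by omega)]
    rfl

/-- plans of strategies are plans. -/
lemma rhoV_mem_PlanSet [Fintype A] [Fintype Z] (τ n : ℕ) {b : Strat A Z} (hb : IsStrat b) :
    rhoV τ n b ∈ PlanSet A Z τ n := by
  have h01 : ∀ (k : ℕ) (θ : Hist A Z (τ + k)), 0 ≤ rho τ b k θ ∧ rho τ b k θ ≤ 1 := by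
    intro k
    induction k with
    | zero => intro θ; exact ⟨zero_le_one, le_refl 1⟩
    | succ k ih =>
      intro θ
      have h1 := ih (Fin.init θ)
      have h2 := (hb (τ + k)).1 (Fin.init θ) (θ (Fin.last (τ + k))).1
      have h3 : b (τ + k) (Fin.init θ) (θ (Fin.last (τ + k))).1 ≤ 1 := by
        have hsum := (hb (τ + k)).2 (Fin.init θ)
        have := Finset.single_le_sum (f := fun a => b (τ + k) (Fin.init θ) a)
          (fun a _ => (hb (τ + k)).1 (Fin.init θ) a) (Finset.mem_univ (θ (Fin.last (τ + k))).1)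
        rw [hsum] at this
        exact this
      constructor
      · exact mul_nonneg h1.1 h2
      · calc rho τ b k (Fin.init θ) * b (τ + k) (Fin.init θ) (θ (Fin.last (τ + k))).1
            ≤ 1 * 1 := mul_le_mul h1.2 h3 h2 zero_le_one
          _ = 1 := by ring
  refine ⟨fun θ => rfl, fun i => (h01 i.1.1 i.2).1, fun i => (h01 i.1.1 i.2).2, ?_, ?_⟩
  · intro k hk θ a z z'
    show rho τ b (k+1) (Fin.snoc θ (a, z)) = rho τ b (k+1) (Fin.snoc θ (a, z'))
    rw [rho_snoc, rho_snoc]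
  · intro k hk θ z
    show (∑ a : A, rho τ b (k+1) (Fin.snoc θ (a, z))) = rho τ b k θ
    rw [Finset.sum_congr rfl (fun a _ => rho_snoc τ b k θ a z), ← Finset.mul_sum,
      (hb (τ + k)).2 θ, mul_one]

section PlanProps

variable [Fintype A] [Fintype Z] [Nonempty A] [Nonempty Z]

lemma planSet_nonempty (τ n : ℕ) : (PlanSet A Z τ n).Nonempty :=
  ⟨rhoV τ n (unifStrat A Z), rhoV_mem_PlanSet τ n isStrat_unifStrat⟩

lemma planSet_convex (τ n : ℕ) : Convex ℝ (PlanSet A Z τ n) := by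
  intro x hx y hy p q hp hq hpq
  obtain ⟨hx0, hx1, hx2, hx3, hx4⟩ := hx
  obtain ⟨hy0, hy1, hy2, hy3, hy4⟩ := hy
  refine ⟨?_, ?_, ?_, ?_, ?_⟩
  · intro θ
    simp only [Pi.add_apply, Pi.smul_apply, smul_eq_mul, hx0 θ, hy0 θ]
    linarith
  · intro i
    simp only [Pi.add_apply, Pi.smul_apply, smul_eq_mul]
    have := hx1 i; have := hy1 i
    nlinarith
  · intro i
    simp only [Pi.add_apply, Pi.smul_apply, smul_eq_mul]
    have := hx2 i; have := hy2 i
    nlinarith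
  · intro k hk θ a z z'
    simp only [Pi.add_apply, Pi.smul_apply, smul_eq_mul, hx3 k hk θ a z z', hy3 k hk θ a z z']
  · intro k hk θ z
    simp only [Pi.add_apply, Pi.smul_apply, smul_eq_mul]
    rw [Finset.sum_add_distrib, ← Finset.mul_sum, ← Finset.mul_sum, hx4 k hk θ z, hy4 k hk θ z]

lemma planSet_isClosed (τ n : ℕ) : IsClosed (PlanSet A Z τ n) := by
  have h1 : IsClosed {x : PIdx A Z τ n → ℝ | ∀ θ : Hist A Z (τ + 0),
      x ⟨⟨0, Nat.succ_pos n⟩, θ⟩ = 1} := by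
    simp only [Set.setOf_forall]
    exact isClosed_iInter fun θ => isClosed_eq (continuous_apply _) continuous_const
  have h2 : IsClosed {x : PIdx A Z τ n → ℝ | ∀ i, 0 ≤ x i} := by
    simp only [Set.setOf_forall]
    exact isClosed_iInter fun i => isClosed_le continuous_const (continuous_apply _)
  have h3 : IsClosed {x : PIdx A Z τ n → ℝ | ∀ i, x i ≤ 1} := by
    simp only [Set.setOf_forall]
    exact isClosed_iInter fun i => isClosed_le (continuous_apply _) continuous_const
  have h4 : IsClosed {x : PIdx A Z τ n → ℝ | ∀ k : ℕ, ∀ hk : k < n, ∀ θ : Hist A Z (τ + k),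
      ∀ a : A, ∀ z z' : Z,
      x ⟨⟨k+1, by omega⟩, Fin.snoc θ (a, z)⟩ = x ⟨⟨k+1, by omega⟩, Fin.snoc θ (a, z')⟩} := by
    simp only [Set.setOf_forall]
    exact isClosed_iInter fun k => isClosed_iInter fun hk => isClosed_iInter fun θ =>
      isClosed_iInter fun a => isClosed_iInter fun z => isClosed_iInter fun z' =>
      isClosed_eq (continuous_apply _) (continuous_apply _)
  have h5 : IsClosed {x : PIdx A Z τ n → ℝ | ∀ k : ℕ, ∀ hk : k < n, ∀ θ : Hist A Z (τ + k),
      ∀ z : Z, (∑ a : A, x ⟨⟨k+1, by omega⟩, Fin.snoc θ (a, z)⟩) = x ⟨⟨k, by omega⟩, θ⟩} := by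
    simp only [Set.setOf_forall]
    exact isClosed_iInter fun k => isClosed_iInter fun hk => isClosed_iInter fun θ =>
      isClosed_iInter fun z =>
      isClosed_eq (by exact continuous_finset_sum _ fun a _ => continuous_apply _)
      (continuous_apply _)
  have : PlanSet A Z τ n =
      {x | ∀ θ : Hist A Z (τ + 0), x ⟨⟨0, Nat.succ_pos n⟩, θ⟩ = 1} ∩
      ({x | ∀ i, 0 ≤ x i} ∩ ({x | ∀ i, x i ≤ 1} ∩
      ({x : PIdx A Z τ n → ℝ | ∀ k : ℕ, ∀ hk : k < n, ∀ θ : Hist A Z (τ + k),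
        ∀ a : A, ∀ z z' : Z,
        x ⟨⟨k+1, by omega⟩, Fin.snoc θ (a, z)⟩ = x ⟨⟨k+1, by omega⟩, Fin.snoc θ (a, z')⟩} ∩
      {x : PIdx A Z τ n → ℝ | ∀ k : ℕ, ∀ hk : k < n, ∀ θ : Hist A Z (τ + k),
        ∀ z : Z, (∑ a : A, x ⟨⟨k+1, by omega⟩, Fin.snoc θ (a, z)⟩) = x ⟨⟨k, by omega⟩, θ⟩}))) := by
    rfl
  rw [this]
  exact h1.inter (h2.inter (h3.inter (h4.inter h5)))

lemma planSet_isCompact (τ n : ℕ) : IsCompact (PlanSet A Z τ n) := by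
  refine IsCompact.of_isClosed_subset
    (isCompact_univ_pi fun _ : PIdx A Z τ n => isCompact_Icc (a := (0:ℝ)) (b := 1))
    (planSet_isClosed τ n) ?_
  intro x hx
  rw [Set.mem_univ_pi]
  exact fun i => ⟨hx.2.1 i, hx.2.2.1 i⟩

/-- Decision rule extracted from a realization plan. -/
noncomputable def planDR (τ n : ℕ) (x : PIdx A Z τ n → ℝ) (k : ℕ) (hk : k < n) :
    DRVec A Z (τ + k) := fun θ a =>
  if x ⟨⟨k, by omega⟩, θ⟩ = 0 then (Fintype.card A : ℝ)⁻¹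
  else x ⟨⟨k+1, by omega⟩, Fin.snoc θ (a, Classical.arbitrary Z)⟩ / x ⟨⟨k, by omega⟩, θ⟩

/-- Behavioral strategy extracted from a realization plan. -/
noncomputable def planStrat (τ n : ℕ) (x : PIdx A Z τ n → ℝ) : Strat A Z :=
  fun t => if h : τ ≤ t ∧ t < τ + n then
      (fun θ a => planDR τ n x (t - τ) (by omega) (θ ∘ Fin.cast (by omega)) a)
    else unifStrat A Z t

lemma planDR_congr (τ n : ℕ) (x : PIdx A Z τ n → ℝ) {k k' : ℕ} (h : k = k')
    (hk : k < n) (hk' : k' < n) (θ : Hist A Z (τ + k')) (a : A) :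
    planDR τ n x k hk (θ ∘ Fin.cast (by rw [h])) a = planDR τ n x k' hk' θ a := by
  subst h
  rfl

lemma planStrat_eval (τ n : ℕ) (x : PIdx A Z τ n → ℝ) (k : ℕ) (hk : k < n) :
    planStrat τ n x (τ + k) = planDR τ n x k hk := by
  have h : τ ≤ τ + k ∧ τ + k < τ + n := ⟨by omega, by omega⟩
  show (if h : τ ≤ τ + k ∧ τ + k < τ + n then
      (fun θ a => planDR τ n x (τ + k - τ) (by omega) (θ ∘ Fin.cast (by omega)) a)
    else unifStrat A Z (τ + k)) = planDR τ n x k hk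
  rw [dif_pos h]
  funext θ a
  exact planDR_congr τ n x (by omega : τ + k - τ = k) (by omega) hk θ a

lemma isDR_planDR (τ n : ℕ) {x : PIdx A Z τ n → ℝ} (hx : x ∈ PlanSet A Z τ n)
    (k : ℕ) (hk : k < n) : IsDR (τ + k) (planDR τ n x k hk) := by
  constructor
  · intro θ a
    simp only [planDR]
    split
    · exact inv_nonneg.mpr (Nat.cast_nonneg _)
    · exact div_nonneg (hx.2.1 _) (hx.2.1 _)
  · intro θ
    simp only [planDR]
    by_cases h0 : x ⟨⟨k, by omega⟩, θ⟩ = 0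
    · simp only [if_pos h0]
      rw [Finset.sum_const, nsmul_eq_mul]
      rw [show (Finset.univ.card : ℝ) = (Fintype.card A : ℝ) from rfl]
      rw [mul_inv_cancel₀]
      exact Nat.cast_ne_zero.mpr Fintype.card_ne_zero
    · simp only [if_neg h0]
      rw [← Finset.sum_div]
      rw [hx.2.2.2.2 k hk θ (Classical.arbitrary Z)]
      exact div_self h0

lemma isStrat_planStrat (τ n : ℕ) {x : PIdx A Z τ n → ℝ} (hx : x ∈ PlanSet A Z τ n) :
    IsStrat (planStrat τ n x) := by
  intro t
  by_cases h : τ ≤ t ∧ t < τ + n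
  · have ht : t = τ + (t - τ) := by omega
    rw [ht, planStrat_eval τ n x (t - τ) (by omega)]
    exact isDR_planDR τ n hx (t - τ) (by omega)
  · have : planStrat τ n x t = unifStrat A Z t := dif_neg h
    rw [this]
    exact isStrat_unifStrat t

lemma rho_planStrat (τ n : ℕ) {x : PIdx A Z τ n → ℝ} (hx : x ∈ PlanSet A Z τ n) :
    ∀ (k : ℕ) (hk : k < n + 1) (θ : Hist A Z (τ + k)),
      rho τ (planStrat τ n x) k θ = x ⟨⟨k, hk⟩, θ⟩ := by
  intro k
  induction k with
  | zero => intro hk θ; exact (hx.1 θ).symm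
  | succ k ih =>
    intro hk θ
    have hkn : k < n := by omega
    rw [rho_succ, planStrat_eval τ n x k hkn, ih (by omega) (Fin.init θ)]
    simp only [planDR]
    have hsnoc : Fin.snoc (Fin.init θ) ((θ (Fin.last (τ+k))).1, (θ (Fin.last (τ+k))).2)
        = θ := by
      rw [show ((θ (Fin.last (τ+k))).1, (θ (Fin.last (τ+k))).2) = θ (Fin.last (τ+k)) from rfl]
      exact Fin.snoc_init_self θ
    by_cases h0 : x ⟨⟨k, by omega⟩, Fin.init θ⟩ = 0
    · simp only [if_pos h0]
      rw [h0, zero_mul]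
      have hz := hx.2.2.2.2 k hkn (Fin.init θ) (θ (Fin.last (τ+k))).2
      rw [h0] at hz
      have hall := (Finset.sum_eq_zero_iff_of_nonneg
        (fun a _ => hx.2.1 ⟨⟨k+1, by omega⟩, Fin.snoc (Fin.init θ) (a, (θ (Fin.last (τ+k))).2)⟩)).1 hz
      have := hall (θ (Fin.last (τ+k))).1 (Finset.mem_univ _)
      rw [hsnoc] at this
      exact this.symm
    · simp only [if_neg h0]
      rw [mul_div_cancel₀ _ h0]
      rw [hx.2.2.2.1 k hkn (Fin.init θ) (θ (Fin.last (τ+k))).1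
        (Classical.arbitrary Z) (θ (Fin.last (τ+k))).2]
      rw [hsnoc]

lemma rhoV_planStrat (τ n : ℕ) {x : PIdx A Z τ n → ℝ} (hx : x ∈ PlanSet A Z τ n) :
    rhoV τ n (planStrat τ n x) = x := by
  funext i
  obtain ⟨⟨k, hk⟩, θ⟩ := i
  exact rho_planStrat τ n hx k hk θ

end PlanProps

end Game

section GameBridge

variable (G : POSG)

/-- Chance part of the occupancy propagation. -/
noncomputable def wch (τ : ℕ) (o : OccVec G τ) :
    (k : ℕ) → (G.S × Hist G.A1 G.Z1 (τ + k) × Hist G.A2 G.Z2 (τ + k)) → ℝ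
  | 0 => o
  | k+1 => fun q => ∑ s : G.S,
      G.P s (q.2.1 (Fin.last (τ + k))).1 (q.2.2 (Fin.last (τ + k))).1
        (q.1, (q.2.1 (Fin.last (τ + k))).2, (q.2.2 (Fin.last (τ + k))).2) *
      wch τ o k (s, Fin.init q.2.1, Fin.init q.2.2)

lemma wch_succ (τ : ℕ) (o : OccVec G τ) (k : ℕ)
    (q : G.S × Hist G.A1 G.Z1 (τ + (k+1)) × Hist G.A2 G.Z2 (τ + (k+1))) :
    wch G τ o (k+1) q = ∑ s : G.S,
      G.P s (q.2.1 (Fin.last (τ + k))).1 (q.2.2 (Fin.last (τ + k))).1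
        (q.1, (q.2.1 (Fin.last (τ + k))).2, (q.2.2 (Fin.last (τ + k))).2) *
      wch G τ o k (s, Fin.init q.2.1, Fin.init q.2.2) := rfl

/-- Trajectory index for the bilinear payoff. -/
abbrev TIdx (τ n : ℕ) : Type :=
  (k : Fin n) × (G.S × Hist G.A1 G.Z1 (τ + k.1) × Hist G.A2 G.Z2 (τ + k.1)) × G.A1 × G.A2

/-- coordinates used by the payoff -/
noncomputable def tIdx1 (τ n : ℕ) (t : TIdx G τ n) : PIdx G.A1 G.Z1 τ n :=
  ⟨⟨t.1.1 + 1, Nat.succ_lt_succ t.1.2⟩, Fin.snoc t.2.1.2.1 (t.2.2.1, Classical.arbitrary G.Z1)⟩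

noncomputable def tIdx2 (τ n : ℕ) (t : TIdx G τ n) : PIdx G.A2 G.Z2 τ n :=
  ⟨⟨t.1.1 + 1, Nat.succ_lt_succ t.1.2⟩, Fin.snoc t.2.1.2.2 (t.2.2.2, Classical.arbitrary G.Z2)⟩

/-- The bilinear payoff on realization plans. -/
noncomputable def Bpay (τ n : ℕ) (o : OccVec G τ)
    (x : PIdx G.A1 G.Z1 τ n → ℝ) (y : PIdx G.A2 G.Z2 τ n → ℝ) : ℝ :=
  ∑ t : TIdx G τ n, x (tIdx1 G τ n t) * y (tIdx2 G τ n t) *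
    (G.γ ^ (t.1 : ℕ) * (wch G τ o t.1.1 t.2.1 * G.r t.2.1.1 t.2.2.1 t.2.2.2))

/-- Occupancy under play. -/
noncomputable def oPlay (τ : ℕ) (o : OccVec G τ)
    (b1 : Strat G.A1 G.Z1) (b2 : Strat G.A2 G.Z2) : (k : ℕ) → OccVec G (τ + k)
  | 0 => o
  | k+1 => Tr G (τ + k) (oPlay τ o b1 b2 k) (b1 (τ + k)) (b2 (τ + k))

lemma oPlay_eq (τ : ℕ) (o : OccVec G τ) (b1 : Strat G.A1 G.Z1) (b2 : Strat G.A2 G.Z2) :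
    ∀ (k : ℕ) (q : G.S × Hist G.A1 G.Z1 (τ + k) × Hist G.A2 G.Z2 (τ + k)),
      oPlay G τ o b1 b2 k q = rho τ b1 k q.2.1 * rho τ b2 k q.2.2 * wch G τ o k q := by
  intro k
  induction k with
  | zero =>
    intro q
    show o q = rho τ b1 0 q.2.1 * rho τ b2 0 q.2.2 * wch G τ o 0 q
    show o q = 1 * 1 * o q
    ring
  | succ k ih =>
    intro q
    show b1 (τ + k) (Fin.init q.2.1) (q.2.1 (Fin.last (τ + k))).1 *
         b2 (τ + k) (Fin.init q.2.2) (q.2.2 (Fin.last (τ + k))).1 *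
         (∑ s : G.S, G.P s (q.2.1 (Fin.last (τ + k))).1 (q.2.2 (Fin.last (τ + k))).1
            (q.1, (q.2.1 (Fin.last (τ + k))).2, (q.2.2 (Fin.last (τ + k))).2) *
            oPlay G τ o b1 b2 k (s, Fin.init q.2.1, Fin.init q.2.2)) = _
    rw [rho_succ, rho_succ, wch_succ]
    rw [Finset.mul_sum, Finset.mul_sum]
    refine Finset.sum_congr rfl fun s _ => ?_
    rw [ih (s, Fin.init q.2.1, Fin.init q.2.2)]
    ring

/-- Discounted expected reward at relative time `k`. -/
noncomputable def Eterm (τ : ℕ) (o : OccVec G τ)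
    (b1 : Strat G.A1 G.Z1) (b2 : Strat G.A2 G.Z2) (k : ℕ) : ℝ :=
  ∑ q : G.S × Hist G.A1 G.Z1 (τ + k) × Hist G.A2 G.Z2 (τ + k), ∑ a1 : G.A1, ∑ a2 : G.A2,
    rho τ b1 (k+1) (Fin.snoc q.2.1 (a1, Classical.arbitrary G.Z1)) *
    rho τ b2 (k+1) (Fin.snoc q.2.2 (a2, Classical.arbitrary G.Z2)) *
    (wch G τ o k q * G.r q.1 a1 a2)

lemma rew_eq_Eterm (τ : ℕ) (o : OccVec G τ) (b1 : Strat G.A1 G.Z1) (b2 : Strat G.A2 G.Z2)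
    (k : ℕ) :
    Rew G (τ + k) (oPlay G τ o b1 b2 k) (b1 (τ + k)) (b2 (τ + k)) = Eterm G τ o b1 b2 k := by
  rw [Rew, Eterm]
  refine Finset.sum_congr rfl fun q _ => Finset.sum_congr rfl fun a1 _ =>
    Finset.sum_congr rfl fun a2 _ => ?_
  rw [oPlay_eq, rho_snoc, rho_snoc]
  ring

lemma valAux_oPlay (τ : ℕ) (o : OccVec G τ) (b1 : Strat G.A1 G.Z1) (b2 : Strat G.A2 G.Z2) :
    ∀ (m k : ℕ), ValAux G m (τ + k) (oPlay G τ o b1 b2 k) b1 b2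
      = ∑ j ∈ Finset.range m, G.γ ^ j * Eterm G τ o b1 b2 (k + j) := by
  intro m
  induction m with
  | zero => intro k; simp [ValAux]
  | succ m ih =>
    intro k
    show Rew G (τ + k) (oPlay G τ o b1 b2 k) (b1 (τ + k)) (b2 (τ + k)) +
        G.γ * ValAux G m (τ + (k+1)) (oPlay G τ o b1 b2 (k+1)) b1 b2 = _
    rw [rew_eq_Eterm, ih (k+1), Finset.sum_range_succ']
    rw [Finset.mul_sum]
    have h1 : ∀ j, G.γ ^ (j+1) * Eterm G τ o b1 b2 (k + (j+1))
        = G.γ * (G.γ ^ j * Eterm G τ o b1 b2 ((k+1) + j)) := by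
      intro j
      rw [show k + (j+1) = (k+1) + j from by omega, pow_succ]
      ring
    rw [Finset.sum_congr rfl fun j _ => h1 j]
    simp only [pow_zero, one_mul, Nat.add_zero]
    ring

/-- The bridge: the value equals the bilinear payoff on realization plans. -/
lemma valAux_eq_Bpay (τ n : ℕ) (o : OccVec G τ)
    (b1 : Strat G.A1 G.Z1) (b2 : Strat G.A2 G.Z2) :
    ValAux G n τ o b1 b2 = Bpay G τ n o (rhoV τ n b1) (rhoV τ n b2) := by
  have h0 : ValAux G n τ o b1 b2
      = ValAux G n (τ + 0) (oPlay G τ o b1 b2 0) b1 b2 := rfl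
  have hk : ∀ k : Fin n, (G.γ ^ (k:ℕ) * Eterm G τ o b1 b2 (k:ℕ)) =
      ∑ p : (G.S × Hist G.A1 G.Z1 (τ + k.1) × Hist G.A2 G.Z2 (τ + k.1)) × G.A1 × G.A2,
        rhoV τ n b1 (tIdx1 G τ n ⟨k, p⟩) * rhoV τ n b2 (tIdx2 G τ n ⟨k, p⟩) *
          (G.γ ^ (k : ℕ) * (wch G τ o (k:ℕ) p.1 * G.r p.1.1 p.2.1 p.2.2)) := by
    intro k
    conv_rhs => rw [Fintype.sum_prod_type]
    rw [Eterm, Finset.mul_sum]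
    refine Finset.sum_congr rfl fun q _ => ?_
    conv_rhs => rw [Fintype.sum_prod_type]
    rw [Finset.mul_sum]
    refine Finset.sum_congr rfl fun a1 _ => ?_
    rw [Finset.mul_sum]
    refine Finset.sum_congr rfl fun a2 _ => ?_
    show G.γ ^ (k:ℕ) *
        (rho τ b1 ((k:ℕ)+1) (Fin.snoc q.2.1 (a1, Classical.arbitrary G.Z1)) *
         rho τ b2 ((k:ℕ)+1) (Fin.snoc q.2.2 (a2, Classical.arbitrary G.Z2)) *
         (wch G τ o (k:ℕ) q * G.r q.1 a1 a2)) =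
      rho τ b1 ((k:ℕ)+1) (Fin.snoc q.2.1 (a1, Classical.arbitrary G.Z1)) *
        rho τ b2 ((k:ℕ)+1) (Fin.snoc q.2.2 (a2, Classical.arbitrary G.Z2)) *
        (G.γ ^ (k : ℕ) * (wch G τ o (k:ℕ) q * G.r q.1 a1 a2))
    ring
  rw [h0, valAux_oPlay]
  simp only [zero_add]
  rw [Bpay]
  rw [show (Finset.univ : Finset (TIdx G τ n)) = Finset.univ.sigma (fun _ => Finset.univ)
    from Finset.univ_sigma_univ.symm, Finset.sum_sigma]
  rw [← Fin.sum_univ_eq_sum_range (fun j => G.γ ^ j * Eterm G τ o b1 b2 j) n]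
  exact Finset.sum_congr rfl fun k _ => hk k

lemma valAux_congr :
    ∀ (m t : ℕ) (o : OccVec G t) (b1 b1' : Strat G.A1 G.Z1) (b2 b2' : Strat G.A2 G.Z2),
      (∀ u, t ≤ u → u < t + m → b1 u = b1' u ∧ b2 u = b2' u) →
      ValAux G m t o b1 b2 = ValAux G m t o b1' b2' := by
  intro m
  induction m with
  | zero => intro t o b1 b1' b2 b2' _; rfl
  | succ m ih =>
    intro t o b1 b1' b2 b2' h
    have h1 : b1 t = b1' t := (h t le_rfl (by omega)).1
    have h2 : b2 t = b2' t := (h t le_rfl (by omega)).2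
    show Rew G t o (b1 t) (b2 t) +
        G.γ * ValAux G m (t+1) (Tr G t o (b1 t) (b2 t)) b1 b2 = _
    rw [h1, h2]
    have := ih (t+1) (Tr G t o (b1' t) (b2' t)) b1 b1' b2 b2'
      (fun u hu hu' => h u (by omega) (by omega))
    rw [this]
    rfl

lemma rhoV_congr {A Z : Type} (τ n : ℕ) {b b' : Strat A Z}
    (h : ∀ u, τ ≤ u → u < τ + n → b u = b' u) : rhoV τ n b = rhoV (A := A) (Z := Z) τ n b' := by
  funext i
  obtain ⟨⟨k, hk⟩, θ⟩ := i
  exact rho_congr τ k (fun u hu hu' => h u hu (by omega)) θ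

lemma Bpay_bound (τ n : ℕ) (o : OccVec G τ) :
    ∃ C : ℝ, ∀ x y, x ∈ PlanSet G.A1 G.Z1 τ n → y ∈ PlanSet G.A2 G.Z2 τ n →
      |Bpay G τ n o x y| ≤ C := by
  refine ⟨∑ t : TIdx G τ n,
    |G.γ ^ (t.1:ℕ) * (wch G τ o t.1.1 t.2.1 * G.r t.2.1.1 t.2.2.1 t.2.2.2)|, ?_⟩
  intro x y hx hy
  refine le_trans (Finset.abs_sum_le_sum_abs _ _) (Finset.sum_le_sum fun t _ => ?_)
  rw [abs_mul, abs_mul]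
  have hx1 : |x (tIdx1 G τ n t)| ≤ 1 :=
    abs_le.2 ⟨by linarith [hx.2.1 (tIdx1 G τ n t)], hx.2.2.1 _⟩
  have hy1 : |y (tIdx2 G τ n t)| ≤ 1 :=
    abs_le.2 ⟨by linarith [hy.2.1 (tIdx2 G τ n t)], hy.2.2.1 _⟩
  have h0 := abs_nonneg (G.γ ^ (t.1:ℕ) * (wch G τ o t.1.1 t.2.1 * G.r t.2.1.1 t.2.2.1 t.2.2.2))
  have hax := abs_nonneg (x (tIdx1 G τ n t))
  have hay := abs_nonneg (y (tIdx2 G τ n t))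
  have h1 : |x (tIdx1 G τ n t)| * |y (tIdx2 G τ n t)| ≤ 1 :=
    le_trans (mul_le_mul hx1 hy1 hay zero_le_one) (by norm_num)
  calc |x (tIdx1 G τ n t)| * |y (tIdx2 G τ n t)| *
      |G.γ ^ (t.1:ℕ) * (wch G τ o t.1.1 t.2.1 * G.r t.2.1.1 t.2.2.1 t.2.2.2)|
      ≤ 1 * |G.γ ^ (t.1:ℕ) * (wch G τ o t.1.1 t.2.1 * G.r t.2.1.1 t.2.2.1 t.2.2.2)| :=
        mul_le_mul_of_nonneg_right h1 h0
    _ = _ := one_mul _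

lemma Bpay_lin1 (τ n : ℕ) (o : OccVec G τ) (y : PIdx G.A2 G.Z2 τ n → ℝ) :
    IsLinearMap ℝ (fun x => Bpay G τ n o x y) := by
  constructor
  · intro x x'
    simp only [Bpay]
    rw [← Finset.sum_add_distrib]
    refine Finset.sum_congr rfl fun t _ => ?_
    simp only [Pi.add_apply]
    ring
  · intro c x
    simp only [Bpay, smul_eq_mul]
    rw [Finset.mul_sum]
    refine Finset.sum_congr rfl fun t _ => ?_
    simp only [Pi.smul_apply, smul_eq_mul]
    ring

lemma Bpay_lin2 (τ n : ℕ) (o : OccVec G τ) (x : PIdx G.A1 G.Z1 τ n → ℝ) :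
    IsLinearMap ℝ (fun y => Bpay G τ n o x y) := by
  constructor
  · intro y y'
    simp only [Bpay]
    rw [← Finset.sum_add_distrib]
    refine Finset.sum_congr rfl fun t _ => ?_
    simp only [Pi.add_apply]
    ring
  · intro c y
    simp only [Bpay, smul_eq_mul]
    rw [Finset.mul_sum]
    refine Finset.sum_congr rfl fun t _ => ?_
    simp only [Pi.smul_apply, smul_eq_mul]
    ring

lemma Bpay_cont1 (τ n : ℕ) (o : OccVec G τ) (y : PIdx G.A2 G.Z2 τ n → ℝ) :
    Continuous (fun x => Bpay G τ n o x y) := by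
  unfold Bpay
  exact continuous_finset_sum _ fun t _ =>
    (((continuous_apply _).mul continuous_const).mul continuous_const)

lemma Bpay_cont2 (τ n : ℕ) (o : OccVec G τ) (x : PIdx G.A1 G.Z1 τ n → ℝ) :
    Continuous (fun y => Bpay G τ n o x y) := by
  unfold Bpay
  exact continuous_finset_sum _ fun t _ =>
    (((continuous_const.mul (continuous_apply _)).mul continuous_const))

end GameBridge

section SupInf

lemma le_iSup_iInf' {ι κ : Type} [Nonempty ι] [Nonempty κ] (F : ι → κ → ℝ) (C : ℝ)
    (hb : ∀ i j, |F i j| ≤ C) (i0 : ι) {w : ℝ} (h : ∀ j, w ≤ F i0 j) :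
    w ≤ ⨆ i, ⨅ j, F i j := by
  have hbb : ∀ i, BddBelow (Set.range (F i)) := fun i =>
    ⟨-C, by rintro z ⟨j, rfl⟩; exact (abs_le.1 (hb i j)).1⟩
  have h2 : BddAbove (Set.range fun i => ⨅ j, F i j) := by
    refine ⟨C, ?_⟩
    rintro z ⟨i, rfl⟩
    exact le_trans (ciInf_le (hbb i) (Classical.arbitrary κ))
      (abs_le.1 (hb i (Classical.arbitrary κ))).2
  exact le_trans (le_ciInf h) (le_ciSup h2 i0)

lemma iSup_iInf_le' {ι κ : Type} [Nonempty ι] [Nonempty κ] (F : ι → κ → ℝ) (C : ℝ)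
    (hb : ∀ i j, |F i j| ≤ C) (j0 : κ) {w : ℝ} (h : ∀ i, F i j0 ≤ w) :
    (⨆ i, ⨅ j, F i j) ≤ w := by
  have hbb : ∀ i, BddBelow (Set.range (F i)) := fun i =>
    ⟨-C, by rintro z ⟨j, rfl⟩; exact (abs_le.1 (hb i j)).1⟩
  exact ciSup_le fun i => le_trans (ciInf_le (hbb i) j0) (h i)

lemma affine_ciSup {ι : Type} [Nonempty ι] (f : ι → ℝ) (C a c : ℝ) (hc : 0 ≤ c)
    (hb : ∀ i, |f i| ≤ C) : a + c * ⨆ i, f i = ⨆ i, (a + c * f i) := by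
  have hmono : Monotone (fun x : ℝ => a + c * x) := fun u v huv => by
    have := mul_le_mul_of_nonneg_left huv hc
    simp only
    linarith
  have hcont : ContinuousAt (fun x : ℝ => a + c * x) (⨆ i, f i) := by fun_prop
  have hbdd : BddAbove (Set.range f) := ⟨C, by rintro z ⟨i, rfl⟩; exact (abs_le.1 (hb i)).2⟩
  exact hmono.map_ciSup_of_continuousAt hcont hbdd

lemma affine_ciInf {ι : Type} [Nonempty ι] (f : ι → ℝ) (C a c : ℝ) (hc : 0 ≤ c)
    (hb : ∀ i, |f i| ≤ C) : a + c * ⨅ i, f i = ⨅ i, (a + c * f i) := by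
  have hmono : Monotone (fun x : ℝ => a + c * x) := fun u v huv => by
    have := mul_le_mul_of_nonneg_left huv hc
    simp only
    linarith
  have hcont : ContinuousAt (fun x : ℝ => a + c * x) (⨅ i, f i) := by fun_prop
  have hbdd : BddBelow (Set.range f) := ⟨-C, by rintro z ⟨i, rfl⟩; exact (abs_le.1 (hb i)).1⟩
  exact hmono.map_ciInf_of_continuousAt hcont hbdd

lemma affine_iSup_iInf {ι κ : Type} [Nonempty ι] [Nonempty κ] (F : ι → κ → ℝ) (C a c : ℝ)
    (hc : 0 ≤ c) (hb : ∀ i j, |F i j| ≤ C) :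
    a + c * (⨆ i, ⨅ j, F i j) = ⨆ i, ⨅ j, (a + c * F i j) := by
  have hbb : ∀ i, BddBelow (Set.range (F i)) := fun i =>
    ⟨-C, by rintro z ⟨j, rfl⟩; exact (abs_le.1 (hb i j)).1⟩
  have hg : ∀ i, |⨅ j, F i j| ≤ C := by
    intro i
    rw [abs_le]
    constructor
    · exact le_ciInf fun j => (abs_le.1 (hb i j)).1
    · exact le_trans (ciInf_le (hbb i) (Classical.arbitrary κ))
        (abs_le.1 (hb i (Classical.arbitrary κ))).2
  rw [affine_ciSup _ C a c hc hg]
  exact iSup_congr fun i => affine_ciInf (F i) C a c hc (hb i)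

end SupInf

section Final

variable (G : POSG)

lemma vstar_repr (τ n : ℕ) (hn : G.H - τ = n) (o : OccVec G τ) :
    Vstar G τ o = ⨆ b1 : {b : Strat G.A1 G.Z1 // IsStrat b},
      ⨅ b2 : {b : Strat G.A2 G.Z2 // IsStrat b},
        Bpay G τ n o (rhoV τ n b1.1) (rhoV τ n b2.1) := by
  subst hn
  simp only [Vstar, Val]
  exact iSup_congr fun b1 => iInf_congr fun b2 => valAux_eq_Bpay G τ _ o b1.1 b2.1

lemma qstar_repr (τ n : ℕ) (hτ : τ < G.H) (hn : G.H - τ = n) (o : OccVec G τ)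
    (β1 : DRVec G.A1 G.Z1 τ) (β2 : DRVec G.A2 G.Z2 τ) :
    Qstar G τ o β1 β2 =
      ⨆ b1' : {b : Strat G.A1 G.Z1 // IsStrat b},
        ⨅ b2' : {b : Strat G.A2 G.Z2 // IsStrat b},
          Bpay G τ n o (rhoV τ n (splice τ β1 b1'.1)) (rhoV τ n (splice τ β2 b2'.1)) := by
  subst hn
  set m := G.H - (τ+1) with hm
  have hnm : G.H - τ = m + 1 := by omega
  obtain ⟨C, hC⟩ := Bpay_bound G (τ+1) m (Tr G τ o β1 β2)
  have hbd : ∀ (b1' : {b : Strat G.A1 G.Z1 // IsStrat b})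
      (b2' : {b : Strat G.A2 G.Z2 // IsStrat b}),
      |ValAux G m (τ+1) (Tr G τ o β1 β2) b1'.1 b2'.1| ≤ C := by
    intro b1' b2'
    rw [valAux_eq_Bpay]
    exact hC _ _ (rhoV_mem_PlanSet _ _ b1'.2) (rhoV_mem_PlanSet _ _ b2'.2)
  have hv : Vstar G (τ+1) (Tr G τ o β1 β2)
      = ⨆ b1' : {b : Strat G.A1 G.Z1 // IsStrat b},
        ⨅ b2' : {b : Strat G.A2 G.Z2 // IsStrat b},
          ValAux G m (τ+1) (Tr G τ o β1 β2) b1'.1 b2'.1 := rfl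
  rw [Qstar, hv, affine_iSup_iInf
    (fun b1' : {b : Strat G.A1 G.Z1 // IsStrat b} =>
      fun b2' : {b : Strat G.A2 G.Z2 // IsStrat b} =>
        ValAux G m (τ+1) (Tr G τ o β1 β2) b1'.1 b2'.1)
    C (Rew G τ o β1 β2) G.γ G.γ_nonneg hbd]
  refine iSup_congr fun b1' => iInf_congr fun b2' => ?_
  have hagree : ValAux G m (τ+1) (Tr G τ o β1 β2) b1'.1 b2'.1
      = ValAux G m (τ+1) (Tr G τ o β1 β2) (splice τ β1 b1'.1) (splice τ β2 b2'.1) :=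
    valAux_congr G m (τ+1) _ _ _ _ _ (fun u hu hu' =>
      ⟨(splice_ne τ β1 b1'.1 (by omega)).symm, (splice_ne τ β2 b2'.1 (by omega)).symm⟩)
  have h1 : Rew G τ o β1 β2 + G.γ * ValAux G m (τ+1) (Tr G τ o β1 β2) b1'.1 b2'.1
      = ValAux G (G.H - τ) τ o (splice τ β1 b1'.1) (splice τ β2 b2'.1) := by
    conv_rhs => rw [hnm]
    show _ = Rew G τ o (splice τ β1 b1'.1 τ) (splice τ β2 b2'.1 τ) +
        G.γ * ValAux G m (τ+1)
          (Tr G τ o (splice τ β1 b1'.1 τ) (splice τ β2 b2'.1 τ))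
          (splice τ β1 b1'.1) (splice τ β2 b2'.1)
    rw [splice_self, splice_self, hagree]
  rw [h1, valAux_eq_Bpay]

end Final

/-- the local game `Q*_τ(o_τ, ·, ·)` admits at least one Nash equilibrium,
and every such equilibrium has value `V*_τ(o_τ)`. -/
theorem local_game_nash_equilibrium (G : POSG) (τ : ℕ) (hτ : τ < G.H)
    (o : OccVec G τ) (ho : IsOcc G τ o) :
    (∃ β1s : DRVec G.A1 G.Z1 τ, ∃ β2s : DRVec G.A2 G.Z2 τ,
      IsDR τ β1s ∧ IsDR τ β2s ∧
      (∀ β1 : DRVec G.A1 G.Z1 τ, IsDR τ β1 →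
          Qstar G τ o β1 β2s ≤ Qstar G τ o β1s β2s) ∧
      (∀ β2 : DRVec G.A2 G.Z2 τ, IsDR τ β2 →
          Qstar G τ o β1s β2s ≤ Qstar G τ o β1s β2)) ∧
    (∀ β1s : DRVec G.A1 G.Z1 τ, ∀ β2s : DRVec G.A2 G.Z2 τ,
      IsDR τ β1s → IsDR τ β2s →
      (∀ β1 : DRVec G.A1 G.Z1 τ, IsDR τ β1 →
          Qstar G τ o β1 β2s ≤ Qstar G τ o β1s β2s) →
      (∀ β2 : DRVec G.A2 G.Z2 τ, IsDR τ β2 →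
          Qstar G τ o β1s β2s ≤ Qstar G τ o β1s β2) →
      Qstar G τ o β1s β2s = Vstar G τ o) := by
  classical
  have hn : G.H - τ = (G.H - τ) := rfl
  set n := G.H - τ with hnn
  have hn' : G.H - τ = n := rfl
  -- saddle point of the bilinear payoff on realization-plan polytopes
  obtain ⟨xs, hxs, ys, hys, hsad1, hsad2⟩ := exists_saddle
    (planSet_nonempty τ n) (planSet_isCompact τ n) (planSet_convex τ n)
    (planSet_nonempty τ n) (planSet_isCompact τ n) (planSet_convex τ n)
    (Bpay G τ n o)
    (fun y => Bpay_cont1 G τ n o y) (fun x => Bpay_cont2 G τ n o x)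
    (fun y => Bpay_lin1 G τ n o y) (fun x => Bpay_lin2 G τ n o x)
  set b1s : Strat G.A1 G.Z1 := planStrat τ n xs with hb1s
  set b2s : Strat G.A2 G.Z2 := planStrat τ n ys with hb2s
  have hb1strat : IsStrat b1s := isStrat_planStrat τ n hxs
  have hb2strat : IsStrat b2s := isStrat_planStrat τ n hys
  have hρ1 : rhoV τ n b1s = xs := rhoV_planStrat τ n hxs
  have hρ2 : rhoV τ n b2s = ys := rhoV_planStrat τ n hys
  obtain ⟨CB, hCB⟩ := Bpay_bound G τ n o
  set w : ℝ := Bpay G τ n o xs ys with hw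
  -- memberships
  have hmem1 : ∀ (β1 : DRVec G.A1 G.Z1 τ), IsDR τ β1 →
      ∀ b : {b : Strat G.A1 G.Z1 // IsStrat b},
      rhoV τ n (splice τ β1 b.1) ∈ PlanSet G.A1 G.Z1 τ n :=
    fun β1 hβ1 b => rhoV_mem_PlanSet τ n (isStrat_splice τ hβ1 b.2)
  have hmem2 : ∀ (β2 : DRVec G.A2 G.Z2 τ), IsDR τ β2 →
      ∀ b : {b : Strat G.A2 G.Z2 // IsStrat b},
      rhoV τ n (splice τ β2 b.1) ∈ PlanSet G.A2 G.Z2 τ n :=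
    fun β2 hβ2 b => rhoV_mem_PlanSet τ n (isStrat_splice τ hβ2 b.2)
  -- frozen-rule plans
  have hsplice1 : rhoV τ n (splice τ (b1s τ) b1s) = xs := by
    rw [← hρ1]
    refine rhoV_congr τ n fun u hu hu' => ?_
    rcases eq_or_ne u τ with h | h
    · rw [h]; exact splice_self τ (b1s τ) b1s
    · exact splice_ne τ (b1s τ) b1s h
  have hsplice2 : rhoV τ n (splice τ (b2s τ) b2s) = ys := by
    rw [← hρ2]
    refine rhoV_congr τ n fun u hu hu' => ?_
    rcases eq_or_ne u τ with h | h
    · rw [h]; exact splice_self τ (b2s τ) b2s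
    · exact splice_ne τ (b2s τ) b2s h
  -- key inequality (c) : playing against b2s τ caps the local value by w
  have hkeyc : ∀ β1 : DRVec G.A1 G.Z1 τ, IsDR τ β1 → Qstar G τ o β1 (b2s τ) ≤ w := by
    intro β1 hβ1
    rw [qstar_repr G τ n hτ hn' o β1 (b2s τ)]
    refine iSup_iInf_le' _ CB
      (fun i j => hCB _ _ (hmem1 β1 hβ1 i) (hmem2 (b2s τ) (hb2strat τ) j))
      ⟨b2s, hb2strat⟩ (fun i => ?_)
    simp only [hsplice2]
    exact hsad1 _ (hmem1 β1 hβ1 i)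
  -- key inequality (d) : playing against b1s τ floors the local value by w
  have hkeyd : ∀ β2 : DRVec G.A2 G.Z2 τ, IsDR τ β2 → w ≤ Qstar G τ o (b1s τ) β2 := by
    intro β2 hβ2
    rw [qstar_repr G τ n hτ hn' o (b1s τ) β2]
    refine le_iSup_iInf' _ CB
      (fun i j => hCB _ _ (hmem1 (b1s τ) (hb1strat τ) i) (hmem2 β2 hβ2 j))
      ⟨b1s, hb1strat⟩ (fun j => ?_)
    simp only [hsplice1]
    exact hsad2 _ (hmem2 β2 hβ2 j)
  -- the optimal value equals w
  have hgoal1 : Vstar G τ o = w := by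
    rw [vstar_repr G τ n hn' o]
    apply le_antisymm
    · refine iSup_iInf_le' _ CB
        (fun i j => hCB _ _ (rhoV_mem_PlanSet τ n i.2) (rhoV_mem_PlanSet τ n j.2))
        ⟨b2s, hb2strat⟩ (fun i => ?_)
      rw [hρ2]
      exact hsad1 _ (rhoV_mem_PlanSet τ n i.2)
    · refine le_iSup_iInf' _ CB
        (fun i j => hCB _ _ (rhoV_mem_PlanSet τ n i.2) (rhoV_mem_PlanSet τ n j.2))
        ⟨b1s, hb1strat⟩ (fun j => ?_)
      rw [hρ1]
      exact hsad2 _ (rhoV_mem_PlanSet τ n j.2)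
  have hQss_le : Qstar G τ o (b1s τ) (b2s τ) ≤ w := hkeyc _ (hb1strat τ)
  have hQss_ge : w ≤ Qstar G τ o (b1s τ) (b2s τ) := hkeyd _ (hb2strat τ)
  have hQss : Qstar G τ o (b1s τ) (b2s τ) = w := le_antisymm hQss_le hQss_ge
  constructor
  · refine ⟨b1s τ, b2s τ, hb1strat τ, hb2strat τ, ?_, ?_⟩
    · intro β1 hβ1
      rw [hQss]
      exact hkeyc β1 hβ1
    · intro β2 hβ2
      rw [hQss]
      exact hkeyd β2 hβ2
  · intro β1s' β2s' h1 h2 hNE1 hNE2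
    have hle : Qstar G τ o β1s' β2s' ≤ w :=
      le_trans (hNE2 (b2s τ) (hb2strat τ)) (hkeyc β1s' h1)
    have hge : w ≤ Qstar G τ o β1s' β2s' :=
      le_trans (hkeyd β2s' h2) (hNE1 (b1s τ) (hb1strat τ))
    rw [hgoal1]
    exact le_antisymm hle hge
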